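/- Let a₁ = (1,1,1)/√3, a₂ = (1,−1,−1)/√3, a₃ = (−1,1,−1)/√3, a₄ = (−1,−1,1)/√3 ∈ ℝ³, fix θ ∈ ℝ³ with ‖θ‖ ≤ 1, and consider the random vector v taking the value 3aᵢ with probability pᵢ = ¼(1 + aᵢ·θ) for i = 1, …, 4. Then the mean quadratic error matrix E[(v − θ)(v − θ)ᵗ] equals the 3×3 symmetric matrix M^{min}(θ) with diagonal entries 3 − θ₁², 3 − θ₂², 3 − θ₃² and off-diagonal entries (1,2): √3·θ₃ − θ₁θ₂, (1,3): √3·θ₂ − θ₁θ₃, (2,3): √3·θ₁ − θ₂θ₃. -/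

import Mathlib

open MeasureTheory

/-- The four Bloch vectors of minimal qubit tomography. -/
noncomputable def tetraStmt18 : Fin 4 → Fin 3 → ℝ :=
  fun i => (Real.sqrt 3)⁻¹ • ![![1, 1, 1], ![1, -1, -1], ![-1, 1, -1], ![-1, -1, 1]] i

theorem tetraInj18 : Function.Injective (fun k => (3:ℝ) • tetraStmt18 k) := by
  have hs : (0:ℝ) < (Real.sqrt 3)⁻¹ := by positivity
  intro k l h
  have h0 := congrFun h 0
  have h1 := congrFun h 1
  clear h
  simp only [tetraStmt18, Pi.smul_apply, smul_eq_mul] at h0 h1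
  fin_cases k <;> fin_cases l <;>
    norm_num [Matrix.cons_val_zero, Matrix.cons_val_one, Matrix.head_cons] at h0 h1 ⊢ <;>
    linarith

/-- a random vector `v` taking the values `3aᵢ` (the Bloch vectors of the
minimal qubit tomography estimates) with probabilities `pᵢ = ¼(1 + aᵢ·θ)` has mean quadratic
error matrix `E[(v−θ)(v−θ)ᵗ] = M^min(θ)`, the symmetric matrix with diagonal `3 − θᵢ²` and
off-diagonal entries `√3θ₃ − θ₁θ₂`, `√3θ₂ − θ₁θ₃`, `√3θ₁ − θ₂θ₃`. -/
theorem minimal_tomography_mqe {Ω : Type*} [MeasurableSpace Ω]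
    (P : Measure Ω) [IsProbabilityMeasure P]
    (θ : EuclideanSpace ℝ (Fin 3)) (hθ : ‖θ‖ ≤ 1)
    (v : Ω → Fin 3 → ℝ) (hv : Measurable v)
    (hprob : ∀ i : Fin 4,
      P {ω | v ω = (3 : ℝ) • tetraStmt18 i} =
        ENNReal.ofReal ((1 + ∑ j, tetraStmt18 i j * θ j) / 4)) :
    ∀ i j, ∫ ω, (v ω i - θ i) * (v ω j - θ j) ∂P =
      Matrix.of
        ![![3 - θ 0 ^ 2, Real.sqrt 3 * θ 2 - θ 0 * θ 1, Real.sqrt 3 * θ 1 - θ 0 * θ 2],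
          ![Real.sqrt 3 * θ 2 - θ 0 * θ 1, 3 - θ 1 ^ 2, Real.sqrt 3 * θ 0 - θ 1 * θ 2],
          ![Real.sqrt 3 * θ 1 - θ 0 * θ 2, Real.sqrt 3 * θ 0 - θ 1 * θ 2, 3 - θ 2 ^ 2]] i j := by
  have hs3 : Real.sqrt 3 * Real.sqrt 3 = 3 := Real.mul_self_sqrt (by norm_num)
  have hsp : (0:ℝ) < Real.sqrt 3 := by positivity
  have hinv : (Real.sqrt 3)⁻¹ = Real.sqrt 3 / 3 := by
    field_simp
    exact (Real.sq_sqrt (by norm_num)).symm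
  -- the squared norm bound
  have hθ2 : θ 0 ^ 2 + θ 1 ^ 2 + θ 2 ^ 2 ≤ 1 := by
    have h := hθ
    rw [EuclideanSpace.norm_eq] at h
    have h2 : ∑ i, ‖θ i‖ ^ 2 ≤ 1 := by
      nlinarith [Real.sq_sqrt (by positivity : (0:ℝ) ≤ ∑ i, ‖θ i‖ ^ 2),
        Real.sqrt_nonneg (∑ i, ‖θ i‖ ^ 2)]
    simpa [Fin.sum_univ_three, sq_abs] using h2
  -- nonnegativity of the probabilities
  have hnn : ∀ k : Fin 4, 0 ≤ (1 + ∑ j, tetraStmt18 k j * θ j) / 4 := by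
    intro k
    fin_cases k <;>
      norm_num [tetraStmt18, Fin.sum_univ_three, Pi.smul_apply, smul_eq_mul,
        Matrix.cons_val_zero, Matrix.cons_val_one, Matrix.head_cons, Matrix.cons_val_two,
        Matrix.tail_cons, hinv] <;>
      [nlinarith [sq_nonneg (θ 0 + θ 1 + θ 2 + Real.sqrt 3), sq_nonneg (θ 0 - θ 1),
         sq_nonneg (θ 0 - θ 2), sq_nonneg (θ 1 - θ 2), hθ2, hs3, hsp];
       nlinarith [sq_nonneg (θ 0 - θ 1 - θ 2 + Real.sqrt 3), sq_nonneg (θ 0 + θ 1),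
         sq_nonneg (θ 0 + θ 2), sq_nonneg (θ 1 - θ 2), hθ2, hs3, hsp];
       nlinarith [sq_nonneg (-θ 0 + θ 1 - θ 2 + Real.sqrt 3), sq_nonneg (θ 0 + θ 1),
         sq_nonneg (θ 1 + θ 2), sq_nonneg (θ 0 - θ 2), hθ2, hs3, hsp];
       nlinarith [sq_nonneg (-θ 0 - θ 1 + θ 2 + Real.sqrt 3), sq_nonneg (θ 0 - θ 1),
         sq_nonneg (θ 0 + θ 2), sq_nonneg (θ 1 + θ 2), hθ2, hs3, hsp]]
  -- the events
  set A : Fin 4 → Set Ω := fun k => {ω | v ω = (3 : ℝ) • tetraStmt18 k} with hA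
  have hmeas : ∀ k, MeasurableSet (A k) := fun k => hv (measurableSet_singleton _)
  have hdisj : Pairwise (Function.onFun Disjoint A) := by
    intro k l hkl
    rw [Function.onFun, Set.disjoint_left]
    intro ω h1 h2
    exact hkl (tetraInj18 ((h1 : v ω = _).symm.trans h2))
  have hsum1 : ∑ k : Fin 4, (1 + ∑ j, tetraStmt18 k j * θ j) / 4 = 1 := by
    have e0 : ∑ j, tetraStmt18 0 j * θ j = (Real.sqrt 3)⁻¹ * (θ 0 + θ 1 + θ 2) := by
      simp [tetraStmt18, Fin.sum_univ_three]; ring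
    have e1 : ∑ j, tetraStmt18 1 j * θ j = (Real.sqrt 3)⁻¹ * (θ 0 - θ 1 - θ 2) := by
      simp [tetraStmt18, Fin.sum_univ_three]; ring
    have e2 : ∑ j, tetraStmt18 2 j * θ j = (Real.sqrt 3)⁻¹ * (-θ 0 + θ 1 - θ 2) := by
      simp [tetraStmt18, Fin.sum_univ_three]; ring
    have e3 : ∑ j, tetraStmt18 3 j * θ j = (Real.sqrt 3)⁻¹ * (-θ 0 - θ 1 + θ 2) := by
      simp [tetraStmt18, Fin.sum_univ_three]; ring
    rw [Fin.sum_univ_four, e0, e1, e2, e3]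
    ring
  have hU : P (⋃ k, A k) = 1 := by
    rw [measure_iUnion hdisj hmeas, tsum_fintype]
    calc ∑ k : Fin 4, P (A k)
        = ∑ k : Fin 4, ENNReal.ofReal ((1 + ∑ j, tetraStmt18 k j * θ j) / 4) := by
          refine Finset.sum_congr rfl fun k _ => hprob k
      _ = ENNReal.ofReal (∑ k : Fin 4, (1 + ∑ j, tetraStmt18 k j * θ j) / 4) :=
          (ENNReal.ofReal_sum_of_nonneg (fun k _ => hnn k)).symm
      _ = 1 := by rw [hsum1]; simp
  have hae : ∀ᵐ ω ∂P, ω ∈ ⋃ k, A k := by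
    rw [ae_iff]
    have : {ω | ¬ ω ∈ ⋃ k, A k} = (⋃ k, A k)ᶜ := rfl
    rw [this, measure_compl (MeasurableSet.iUnion hmeas) (measure_ne_top P _), hU,
      measure_univ, tsub_self]
  intro i j
  set c : Fin 4 → ℝ :=
    fun k => (((3 : ℝ) • tetraStmt18 k) i - θ i) * (((3 : ℝ) • tetraStmt18 k) j - θ j) with hc
  have hfg : (fun ω => (v ω i - θ i) * (v ω j - θ j)) =ᵐ[P]
      (fun ω => ∑ k : Fin 4, (A k).indicator (fun _ => c k) ω) := by
    filter_upwards [hae] with ω hω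
    rw [Set.mem_iUnion] at hω
    obtain ⟨k, hk⟩ := hω
    have hvω : v ω = (3 : ℝ) • tetraStmt18 k := hk
    rw [Finset.sum_eq_single k]
    · rw [Set.indicator_of_mem hk, hc, hvω]
    · intro l _ hlk
      refine Set.indicator_of_notMem (fun hl => hlk ?_) _
      exact tetraInj18 ((hl : v ω = _).symm.trans hvω)
    · intro h; exact absurd (Finset.mem_univ k) h
  rw [integral_congr_ae hfg]
  rw [integral_finset_sum _ (fun k _ => (integrable_const (c k)).indicator (hmeas k))]
  have hint : ∀ k : Fin 4, ∫ ω, (A k).indicator (fun _ => c k) ω ∂P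
      = ((1 + ∑ j, tetraStmt18 k j * θ j) / 4) * c k := by
    intro k
    have hPk : P (A k) = ENNReal.ofReal ((1 + ∑ j, tetraStmt18 k j * θ j) / 4) := hprob k
    rw [integral_indicator_const _ (hmeas k), measureReal_def, hPk, ENNReal.toReal_ofReal (hnn k), smul_eq_mul]
  rw [Finset.sum_congr rfl fun k _ => hint k]
  -- final arithmetic
  have h3 : ∀ x : Fin 3, x = 0 ∨ x = 1 ∨ x = 2 := by decide
  have tv : ∀ k jj, tetraStmt18 k jj =
      (Real.sqrt 3)⁻¹ * ![![1, 1, 1], ![1, -1, -1], ![-1, 1, -1], ![-1, -1, 1]] k jj :=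
    fun k jj => rfl
  have h4 : ∀ x : Fin 4, x = 0 ∨ x = 1 ∨ x = 2 ∨ x = 3 := by decide
  rcases h3 i with rfl | rfl | rfl <;> rcases h3 j with rfl | rfl | rfl <;>
    simp only [hc, Fin.sum_univ_four, Fin.sum_univ_three, Pi.smul_apply, smul_eq_mul,
      Matrix.of_apply, Matrix.cons_val', Matrix.cons_val_zero, Matrix.cons_val_one,
      Matrix.head_cons, Matrix.cons_val_two, Matrix.tail_cons, Matrix.cons_val_three,
      Matrix.empty_val', Matrix.cons_val_fin_one, Matrix.head_fin_const, tv, hinv] <;>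
    [ linear_combination (1 - 2 * θ 0 ^ 2 / 3) * hs3;
      linear_combination ((Real.sqrt 3 * θ 2 - 2 * θ 0 * θ 1) / 3) * hs3;
      linear_combination ((Real.sqrt 3 * θ 1 - 2 * θ 0 * θ 2) / 3) * hs3;
      linear_combination ((Real.sqrt 3 * θ 2 - 2 * θ 0 * θ 1) / 3) * hs3;
      linear_combination (1 - 2 * θ 1 ^ 2 / 3) * hs3;
      linear_combination ((Real.sqrt 3 * θ 0 - 2 * θ 1 * θ 2) / 3) * hs3;
      linear_combination ((Real.sqrt 3 * θ 1 - 2 * θ 0 * θ 2) / 3) * hs3;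
      linear_combination ((Real.sqrt 3 * θ 0 - 2 * θ 1 * θ 2) / 3) * hs3;
      linear_combination (1 - 2 * θ 2 ^ 2 / 3) * hs3]
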